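/- There exists a strictly increasing integer sequence (a_n)_{n≥0} with a_0 ≥ 2 and limsup_n (a_{n+1} − a_n) = ∞ such that L({a_n : n ≥ 0}) ∪ {0} contains an infinite-dimensional linear subspace of ℓ∞. -/

import Mathlib

open Filter Topology Set ENNReal

noncomputable section

/-- The set of accumulation points of a real sequence: limits of convergent subsequences. -/
def accPts (x : ℕ → ℝ) : Set ℝ :=
  {a | ∃ φ : ℕ → ℕ, StrictMono φ ∧ Tendsto (fun k => x (φ k)) atTop (𝓝 a)}


/-- The space ℓ∞ of bounded real sequences. -/
abbrev Linf : Type := ↥(lp (fun _ : ℕ => ℝ) ∞)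

/-- Accumulation points of an element of ℓ∞. -/
def accPtsL (z : Linf) : Set ℝ := accPts (fun n => z n)

/-! ### Construction -/

/-- partial sums of `4^i`. -/
def sg (k : ℕ) : ℕ := ∑ i ∈ Finset.range (k + 1), 4 ^ i

lemma sg_le (k : ℕ) : sg k ≤ 2 * 4 ^ k := by
  induction k with
  | zero => simp [sg]
  | succ n ih =>
    have : sg (n + 1) = sg n + 4 ^ (n + 1) := by
      simp [sg, Finset.sum_range_succ]
    rw [this]
    have : 2 * 4 ^ n + 4 ^ (n+1) ≤ 2 * 4 ^ (n+1) := by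
      ring_nf
      nlinarith [pow_pos (show 0 < 4 by norm_num) n]
    omega

lemma pow_le_sg {i k : ℕ} (h : i ≤ k) : 4 ^ i ≤ sg k :=
  Finset.single_le_sum (f := fun i => 4 ^ i) (by intro j _; positivity)
    (Finset.mem_range.2 (by omega))

/-- The predicate whose enumeration is the sequence `a`. -/
def pP (m : ℕ) : Prop := ∃ k, 4 ^ k < m ∧ m ≤ 1 + sg k

lemma pP_pow_succ (k : ℕ) : pP (4 ^ k + 1) :=
  ⟨k, by omega, by have := pow_le_sg (le_refl k); omega⟩

lemma pP_infinite : (setOf pP).Infinite := by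
  have hmono : StrictMono fun k : ℕ => 4 ^ k + 1 := by
    intro a b h
    simp only [add_lt_add_iff_right]
    exact Nat.pow_lt_pow_right (by norm_num) h
  exact Set.infinite_of_injective_forall_mem (f := fun k : ℕ => 4 ^ k + 1)
    hmono.injective (fun k => pP_pow_succ k)

lemma pP_two : pP 2 := by simpa using pP_pow_succ 0

lemma pP_ge_two {m : ℕ} (h : pP m) : 2 ≤ m := by
  obtain ⟨k, h1, _⟩ := h
  have : 1 ≤ 4 ^ k := Nat.one_le_two_pow.trans (Nat.pow_le_pow_left (by norm_num) k)
  omega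

lemma pP_sg (k : ℕ) : pP (1 + sg k) :=
  ⟨k, by have := pow_le_sg (le_refl k); omega, le_refl _⟩

lemma pP_gap {k m : ℕ} (h : pP m) (hm : 1 + sg k < m) : 4 ^ (k + 1) + 1 ≤ m := by
  obtain ⟨k', h1, h2⟩ := h
  rcases le_or_gt k' k with hk | hk
  · have : sg k' ≤ sg k := by
      apply Finset.sum_le_sum_of_subset
      intro x hx
      simp only [Finset.mem_range] at *
      omega
    omega
  · have : 4 ^ (k + 1) ≤ 4 ^ k' := Nat.pow_le_pow_right (by norm_num) hk
    omega

/-- The base sequences. -/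
def zfun (i : ℕ) : ℕ → ℝ := fun n =>
  if n.unpair.1 = i then ((n.unpair.2 % 4 ^ i + 1 : ℕ) : ℝ) / ((4 : ℝ) ^ i) else 0

lemma zfun_pair (i a b : ℕ) :
    zfun i (Nat.pair a b) =
      if a = i then ((b % 4 ^ i + 1 : ℕ) : ℝ) / ((4 : ℝ) ^ i) else 0 := by
  simp [zfun, Nat.unpair_pair]

lemma zfun_nonneg (i n : ℕ) : 0 ≤ zfun i n := by
  unfold zfun
  split
  · positivity
  · exact le_refl 0

lemma zfun_le_one (i n : ℕ) : zfun i n ≤ 1 := by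
  unfold zfun
  split
  · rw [div_le_one (by positivity)]
    have h : n.unpair.2 % 4 ^ i < 4 ^ i := Nat.mod_lt _ (by positivity)
    have : ((n.unpair.2 % 4 ^ i + 1 : ℕ) : ℝ) ≤ ((4 ^ i : ℕ) : ℝ) := by
      exact_mod_cast Nat.succ_le_of_lt h
    simpa using this
  · norm_num

lemma zfun_memℓp (i : ℕ) : Memℓp (zfun i) ∞ := by
  apply memℓp_infty
  refine ⟨1, ?_⟩
  rintro x ⟨n, rfl⟩
  show ‖zfun i n‖ ≤ 1
  rw [Real.norm_eq_abs, abs_of_nonneg (zfun_nonneg i n)]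
  exact zfun_le_one i n

/-- The basic vectors in `ℓ∞`. -/
def Zv (i : ℕ) : Linf := ⟨zfun i, zfun_memℓp i⟩

@[simp] lemma Zv_apply (i n : ℕ) : (Zv i : ℕ → ℝ) n = zfun i n := rfl

/-- Evaluation at a coordinate, as a linear map. -/
def evalL (n : ℕ) : Linf →ₗ[ℝ] ℝ where
  toFun f := f n
  map_add' f g := by
    have := lp.coeFn_add f g
    calc ((f + g : Linf) : ℕ → ℝ) n = (⇑f + ⇑g) n := by rw [this]
    _ = f n + g n := rfl
  map_smul' c f := by
    have := lp.coeFn_smul c f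
    calc ((c • f : Linf) : ℕ → ℝ) n = (c • ⇑f) n := by rw [this]
    _ = c * f n := rfl

@[simp] lemma evalL_apply (n : ℕ) (f : Linf) : evalL n f = f n := rfl

lemma li_Zv : LinearIndependent ℝ Zv := by
  rw [linearIndependent_iff']
  intro s g hs i hi
  have h0 : evalL (Nat.pair i 0) (∑ j ∈ s, g j • Zv j) = 0 := by rw [hs]; simp
  rw [map_sum] at h0
  have hterm : ∀ j ∈ s, evalL (Nat.pair i 0) (g j • Zv j)
      = if j = i then g j / 4 ^ i else 0 := by
    intro j _
    rw [map_smul]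
    simp only [evalL_apply, Zv_apply, zfun_pair, smul_eq_mul]
    by_cases h : j = i
    · subst h
      simp
      ring
    · rw [if_neg (by omega), if_neg h]
      ring
  rw [Finset.sum_congr rfl hterm, Finset.sum_ite_eq' s i (fun j => g j / 4 ^ i),
    if_pos hi] at h0
  have h4 : (4 : ℝ) ^ i ≠ 0 := by positivity
  field_simp at h0
  simpa using h0

/-- The key computation: accumulation points of a finite combination. -/
lemma main_comb (c : ℕ →₀ ℝ) (hc : c ≠ 0) :
    (accPtsL (c.sum fun i a => a • Zv i)).Finite ∧
      pP (accPtsL (c.sum fun i a => a • Zv i)).ncard := by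
  classical
  set z : Linf := c.sum fun i a => a • Zv i with hz
  have hFne : c.support.Nonempty := Finsupp.support_nonempty_iff.2 hc
  set F : Finset ℕ := c.support with hF
  set k : ℕ := F.max' hFne with hk
  have hkF : k ∈ F := F.max'_mem hFne
  have hle : ∀ i ∈ F, i ≤ k := fun i hi => F.le_max' i hi
  -- coordinates of z
  have hcoord : ∀ n, (z : ℕ → ℝ) n = ∑ i ∈ F, c i * zfun i n := by
    intro n
    have : evalL n z = ∑ i ∈ F, c i * zfun i n := by
      rw [hz, Finsupp.sum, map_sum]
      apply Finset.sum_congr rfl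
      intro i _
      rw [map_smul]
      simp
    simpa using this
  -- the value function
  set g : ℕ → ℕ → ℝ := fun i j => c i * (((j + 1 : ℕ) : ℝ) / (4 : ℝ) ^ i) with hg
  -- the finite set of values
  set WF : Finset ℝ :=
    insert (0 : ℝ) (F.biUnion fun i => (Finset.range (4 ^ i)).image (g i)) with hWF
  -- z n ∈ WF for all n
  have hrange : ∀ n, (z : ℕ → ℝ) n ∈ WF := by
    intro n
    rw [hcoord]
    rcases Nat.pair_unpair n with hpu
    by_cases hmem : n.unpair.1 ∈ F
    · have : ∑ i ∈ F, c i * zfun i n = g n.unpair.1 (n.unpair.2 % 4 ^ n.unpair.1) := by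
        rw [Finset.sum_eq_single n.unpair.1]
        · unfold zfun
          rw [if_pos rfl, hg]
        · intro j hj hne
          unfold zfun
          rw [if_neg (by omega), mul_zero]
        · intro h; exact absurd hmem h
      rw [this, hWF]
      apply Finset.mem_insert_of_mem
      apply Finset.mem_biUnion.2
      exact ⟨n.unpair.1, hmem, Finset.mem_image.2
        ⟨n.unpair.2 % 4 ^ n.unpair.1,
         Finset.mem_range.2 (Nat.mod_lt _ (by positivity)), rfl⟩⟩
    · have : ∑ i ∈ F, c i * zfun i n = 0 := by
        apply Finset.sum_eq_zero
        intro j hj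
        unfold zfun
        rw [if_neg (by intro h; rw [← h] at hj; exact hmem hj), mul_zero]
      rw [this, hWF]
      exact Finset.mem_insert_self _ _
  -- accPts ⊆ WF
  have hsub : accPtsL z ⊆ (WF : Set ℝ) := by
    rintro x ⟨φ, hφ, hlim⟩
    have hcl : IsClosed (WF : Set ℝ) := (WF : Set ℝ).toFinite.isClosed
    exact hcl.mem_of_tendsto hlim (Filter.Eventually.of_forall fun m => hrange (φ m))
  -- WF ⊆ accPts
  have hsup : (WF : Set ℝ) ⊆ accPtsL z := by
    intro x hx
    rw [hWF] at hx
    simp only [Finset.coe_insert, Set.mem_insert_iff, Finset.coe_biUnion,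
      Set.mem_iUnion, Finset.mem_coe, Finset.mem_image, Finset.mem_range] at hx
    rcases hx with rfl | ⟨i, hi, j, hj, rfl⟩
    · -- 0 is an accumulation point
      refine ⟨fun m => Nat.pair (k + 1) m, ?_, ?_⟩
      · intro a b hab
        exact Nat.pair_lt_pair_right _ hab
      · have : ∀ m, (z : ℕ → ℝ) (Nat.pair (k + 1) m) = 0 := by
          intro m
          rw [hcoord]
          apply Finset.sum_eq_zero
          intro i hi
          rw [zfun_pair, if_neg, mul_zero]
          have := hle i hi
          omega
        simp only [this]
        exact tendsto_const_nhds
    · -- g i j is an accumulation point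
      refine ⟨fun m => Nat.pair i (j + m * 4 ^ i), ?_, ?_⟩
      · intro a b hab
        apply Nat.pair_lt_pair_right
        have : 0 < 4 ^ i := by positivity
        exact Nat.add_lt_add_left ((Nat.mul_lt_mul_right this).2 hab) j
      · have : ∀ m, (z : ℕ → ℝ) (Nat.pair i (j + m * 4 ^ i)) = g i j := by
          intro m
          rw [hcoord, Finset.sum_eq_single i]
          · rw [zfun_pair, if_pos rfl, Nat.add_mul_mod_self_right,
              Nat.mod_eq_of_lt hj, hg]
          · intro b hb hne
            rw [zfun_pair, if_neg (by omega), mul_zero]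
          · intro h; exact absurd hi h
        simp only [this]
        exact tendsto_const_nhds
  have hEq : accPtsL z = (WF : Set ℝ) := Set.Subset.antisymm hsub hsup
  rw [hEq]
  refine ⟨(WF : Set ℝ).toFinite, ?_⟩
  rw [Set.ncard_coe_finset]
  -- cardinality bounds
  have hck : c k ≠ 0 := Finsupp.mem_support_iff.1 hkF
  have hinj : Set.InjOn (g k) (Finset.range (4 ^ k)) := by
    intro a _ b _ hab
    simp only [hg] at hab
    have h2 := mul_left_cancel₀ hck hab
    have h4 : (4 : ℝ) ^ k ≠ 0 := by positivity
    field_simp at h2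
    exact_mod_cast (by simpa using h2 : a = b)
  have hzero : (0 : ℝ) ∉ (Finset.range (4 ^ k)).image (g k) := by
    intro h
    rcases Finset.mem_image.1 h with ⟨j, hj, hgj⟩
    simp only [hg] at hgj
    have h1 : ((j + 1 : ℕ) : ℝ) ≠ 0 := by positivity
    have h4 : (4 : ℝ) ^ k ≠ 0 := by positivity
    rcases mul_eq_zero.1 hgj with h' | h'
    · exact hck h'
    · rcases div_eq_zero_iff.1 h' with h'' | h''
      · exact h1 h''
      · exact h4 h''
  have hlower : 4 ^ k + 1 ≤ WF.card := by
    have hsubF : insert (0:ℝ) ((Finset.range (4 ^ k)).image (g k)) ⊆ WF := by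
      apply Finset.insert_subset_insert
      intro x hx
      exact Finset.mem_biUnion.2 ⟨k, hkF, hx⟩
    have hcard1 : (insert (0:ℝ) ((Finset.range (4 ^ k)).image (g k))).card
        = 4 ^ k + 1 := by
      rw [Finset.card_insert_of_notMem hzero,
        Finset.card_image_of_injOn hinj, Finset.card_range]
    calc 4 ^ k + 1 = _ := hcard1.symm
    _ ≤ WF.card := Finset.card_le_card hsubF
  have hupper : WF.card ≤ 1 + sg k := by
    have h1 : WF.card ≤ 1 + (F.biUnion fun i => (Finset.range (4 ^ i)).image (g i)).card := by
      rw [hWF]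
      have := Finset.card_insert_le (0:ℝ)
        (F.biUnion fun i => (Finset.range (4 ^ i)).image (g i))
      omega
    have h2 : (F.biUnion fun i => (Finset.range (4 ^ i)).image (g i)).card
        ≤ ∑ i ∈ F, 4 ^ i := by
      calc (F.biUnion fun i => (Finset.range (4 ^ i)).image (g i)).card
          ≤ ∑ i ∈ F, ((Finset.range (4 ^ i)).image (g i)).card :=
            Finset.card_biUnion_le
      _ ≤ ∑ i ∈ F, 4 ^ i := by
          apply Finset.sum_le_sum
          intro i _
          calc ((Finset.range (4 ^ i)).image (g i)).card
              ≤ (Finset.range (4 ^ i)).card := Finset.card_image_le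
          _ = 4 ^ i := Finset.card_range _
    have h3 : ∑ i ∈ F, 4 ^ i ≤ sg k := by
      apply Finset.sum_le_sum_of_subset
      intro i hi
      exact Finset.mem_range.2 (by have := hle i hi; omega)
    omega
  exact ⟨k, by omega, hupper⟩

theorem exists_lineable_with_unbounded_gaps :
    ∃ a : ℕ → ℕ, StrictMono a ∧ 2 ≤ a 0 ∧
      (∀ C : ℕ, ∃ m : ℕ, C ≤ a (m + 1) - a m) ∧
      ∃ M : Submodule ℝ Linf, ¬ Module.Finite ℝ M ∧
        ∀ z ∈ M, z ≠ 0 → (accPtsL z).Finite ∧ (accPtsL z).ncard ∈ Set.range a := by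
  classical
  refine ⟨Nat.nth pP, Nat.nth_strictMono pP_infinite, ?_, ?_, ?_⟩
  · exact pP_ge_two (Nat.nth_mem_of_infinite pP_infinite 0)
  · intro C
    set k := C with hkC
    refine ⟨Nat.count pP (1 + sg k), ?_⟩
    have h1 : Nat.nth pP (Nat.count pP (1 + sg k)) = 1 + sg k :=
      Nat.nth_count (pP_sg k)
    have h2 : pP (Nat.nth pP (Nat.count pP (1 + sg k) + 1)) :=
      Nat.nth_mem_of_infinite pP_infinite _
    have h3 : Nat.nth pP (Nat.count pP (1 + sg k)) <
        Nat.nth pP (Nat.count pP (1 + sg k) + 1) :=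
      Nat.nth_strictMono pP_infinite (by omega)
    have h4 : 4 ^ (k + 1) + 1 ≤ Nat.nth pP (Nat.count pP (1 + sg k) + 1) :=
      pP_gap h2 (by omega)
    have h5 : sg k ≤ 2 * 4 ^ k := sg_le k
    have h6 : k < 4 ^ k := Nat.lt_pow_self (by norm_num)
    have h7 : 4 ^ (k + 1) = 4 * 4 ^ k := by ring
    omega
  · refine ⟨Submodule.span ℝ (Set.range Zv), ?_, ?_⟩
    · intro hfin
      have hv : LinearIndependent ℝ
          (fun i => (⟨Zv i, Submodule.subset_span (Set.mem_range_self i)⟩ :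
            Submodule.span ℝ (Set.range Zv))) := by
        apply LinearIndependent.of_comp (Submodule.span ℝ (Set.range Zv)).subtype
        convert li_Zv
        rfl
      haveI := hv.finite
      exact not_finite ℕ
    · intro z hz hzne
      rcases Finsupp.mem_span_range_iff_exists_finsupp.1 hz with ⟨c, rfl⟩
      have hc : c ≠ 0 := by
        rintro rfl
        simp at hzne
      obtain ⟨hfin, hpP⟩ := main_comb c hc
      exact ⟨hfin, Nat.count pP _, Nat.nth_count hpP⟩
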